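/- Let c : ℝ → ℝ be smooth with c(v) ≥ c₀ > 0, and let u, w, z, p, q, x, t : ℝ² → ℝ be smooth functions solving the semilinear system. Let (X₀,Y₀) be a point where w(X₀,Y₀) = π and w_X(X₀,Y₀) = 0, and write u₀ = u(X₀,Y₀), z₀ = z(X₀,Y₀), p₀ = p(X₀,Y₀), q₀ = q(X₀,Y₀). Then at (X₀,Y₀): x_X = x_XX = x_XXX = x_XXXX = x_XY = x_XXY = 0, x_XXXXX = 3·w_XX(X₀,Y₀)²·p₀/4, x_Y = −(1+cos z₀)·q₀/4; and t_X = t_XX = t_XXX = t_XXXX = t_XY = t_XXY = 0, t_XXXXX = 3·w_XX(X₀,Y₀)²·p₀/(4c(u₀)), t_Y = (1+cos z₀)·q₀/(4c(u₀)). -/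

import Mathlib

/-- Partial derivative in the `X`-direction. -/
noncomputable def dX (f : ℝ × ℝ → ℝ) (P : ℝ × ℝ) : ℝ := fderiv ℝ f P (1, 0)

/-- Partial derivative in the `Y`-direction. -/
noncomputable def dY (f : ℝ × ℝ → ℝ) (P : ℝ × ℝ) : ℝ := fderiv ℝ f P (0, 1)

/-- The semilinear system associated with the wave equation
`u_tt - c(u)(c(u)u_x)_x = 0`, in characteristic coordinates `(X,Y)`. -/
def SolvesSystem (c : ℝ → ℝ) (u w z p q x t : ℝ × ℝ → ℝ) : Prop :=
  ∀ P : ℝ × ℝ,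
    dX u P = Real.sin (w P) * p P / (4 * c (u P)) ∧
    dY u P = Real.sin (z P) * q P / (4 * c (u P)) ∧
    dY w P = deriv c (u P) / (8 * c (u P) ^ 2) * (Real.cos (z P) - Real.cos (w P)) * q P ∧
    dX z P = deriv c (u P) / (8 * c (u P) ^ 2) * (Real.cos (w P) - Real.cos (z P)) * p P ∧
    dY p P = deriv c (u P) / (8 * c (u P) ^ 2) * (Real.sin (z P) - Real.sin (w P)) * (p P * q P) ∧
    dX q P = deriv c (u P) / (8 * c (u P) ^ 2) * (Real.sin (w P) - Real.sin (z P)) * (p P * q P) ∧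
    dX x P = (1 + Real.cos (w P)) * p P / 4 ∧
    dY x P = -((1 + Real.cos (z P)) * q P) / 4 ∧
    dX t P = (1 + Real.cos (w P)) * p P / (4 * c (u P)) ∧
    dY t P = (1 + Real.cos (z P)) * q P / (4 * c (u P))

/-- All seven components are smooth on the whole plane. -/
def Smooth7 (u w z p q x t : ℝ × ℝ → ℝ) : Prop :=
  ContDiff ℝ (⊤ : ℕ∞) u ∧ ContDiff ℝ (⊤ : ℕ∞) w ∧ ContDiff ℝ (⊤ : ℕ∞) z ∧
  ContDiff ℝ (⊤ : ℕ∞) p ∧ ContDiff ℝ (⊤ : ℕ∞) q ∧ ContDiff ℝ (⊤ : ℕ∞) x ∧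
  ContDiff ℝ (⊤ : ℕ∞) t

lemma hasDerivAt_dX (f : ℝ × ℝ → ℝ) {a b : ℝ} (hf : DifferentiableAt ℝ f (a, b)) :
    HasDerivAt (fun s => f (s, b)) (dX f (a, b)) a := by
  have hL : HasDerivAt (fun s : ℝ => (s, b)) ((1 : ℝ), (0 : ℝ)) a :=
    (hasDerivAt_id a).prodMk (hasDerivAt_const a b)
  exact hf.hasFDerivAt.comp_hasDerivAt a hL

lemma hasDerivAt_dY (f : ℝ × ℝ → ℝ) {a b : ℝ} (hf : DifferentiableAt ℝ f (a, b)) :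
    HasDerivAt (fun s => f (a, s)) (dY f (a, b)) b := by
  have hL : HasDerivAt (fun s : ℝ => (a, s)) ((0 : ℝ), (1 : ℝ)) b :=
    (hasDerivAt_const b a).prodMk (hasDerivAt_id b)
  exact hf.hasFDerivAt.comp_hasDerivAt b hL

lemma contDiff_dX {f : ℝ × ℝ → ℝ} (hf : ContDiff ℝ (⊤ : ℕ∞) f) : ContDiff ℝ (⊤ : ℕ∞) (dX f) :=
  ((contDiff_infty_iff_fderiv.mp hf).2).clm_apply contDiff_const

lemma cos_half_sq (y : ℝ) : Real.cos (y/2) * Real.cos (y/2) = 1/2 + Real.cos y / 2 := by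
  have h := Real.cos_sq (y/2)
  rw [show 2*(y/2) = y by ring] at h
  rw [← sq]; exact h


lemma quad_derivs (C P : ℝ → ℝ) (hC : ContDiff ℝ (⊤:ℕ∞) C) (hP : ContDiff ℝ (⊤:ℕ∞) P)
    (a : ℝ) (h0 : C a = 0) (h1 : deriv C a = 0) :
    deriv (fun s => C s * C s * P s) a = 0 ∧
    deriv (deriv (fun s => C s * C s * P s)) a = 0 ∧
    deriv (deriv (deriv (fun s => C s * C s * P s))) a = 0 ∧
    deriv (deriv (deriv (deriv (fun s => C s * C s * P s)))) a
      = 6 * (deriv (deriv C) a)^2 * P a := by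
  have h1le : ((⊤:ℕ∞) : WithTop ℕ∞) ≠ 0 := by simp
  have hC1 : ContDiff ℝ (⊤:ℕ∞) (deriv C) := (contDiff_infty_iff_deriv.mp hC).2
  have hC2 : ContDiff ℝ (⊤:ℕ∞) (deriv (deriv C)) := (contDiff_infty_iff_deriv.mp hC1).2
  have hC3 : ContDiff ℝ (⊤:ℕ∞) (deriv (deriv (deriv C))) := (contDiff_infty_iff_deriv.mp hC2).2
  have hP1 : ContDiff ℝ (⊤:ℕ∞) (deriv P) := (contDiff_infty_iff_deriv.mp hP).2
  have hP2 : ContDiff ℝ (⊤:ℕ∞) (deriv (deriv P)) := (contDiff_infty_iff_deriv.mp hP1).2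
  have dC : ∀ s, HasDerivAt C (deriv C s) s := fun s => (hC.differentiable h1le s).hasDerivAt
  have dC1 : ∀ s, HasDerivAt (deriv C) (deriv (deriv C) s) s :=
    fun s => (hC1.differentiable h1le s).hasDerivAt
  have dC2 : ∀ s, HasDerivAt (deriv (deriv C)) (deriv (deriv (deriv C)) s) s :=
    fun s => (hC2.differentiable h1le s).hasDerivAt
  have dC3 : ∀ s, HasDerivAt (deriv (deriv (deriv C))) (deriv (deriv (deriv (deriv C))) s) s :=
    fun s => (hC3.differentiable h1le s).hasDerivAt
  have dP : ∀ s, HasDerivAt P (deriv P s) s := fun s => (hP.differentiable h1le s).hasDerivAt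
  have dP1 : ∀ s, HasDerivAt (deriv P) (deriv (deriv P) s) s :=
    fun s => (hP1.differentiable h1le s).hasDerivAt
  have dP2 : ∀ s, HasDerivAt (deriv (deriv P)) (deriv (deriv (deriv P)) s) s :=
    fun s => (hP2.differentiable h1le s).hasDerivAt
  have dP3 : ∀ s, HasDerivAt (deriv (deriv (deriv P))) (deriv (deriv (deriv (deriv P))) s) s :=
    fun s => (((contDiff_infty_iff_deriv.mp hP2).2).differentiable h1le s).hasDerivAt
  -- level 1
  have s1 : ∀ s, HasDerivAt (fun s => C s * C s * P s)
      (2*(deriv C s)*C s*P s + C s*C s*(deriv P s)) s := fun s =>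
    (((dC s).mul (dC s)).mul (dP s)).congr_deriv (by simp only [Pi.mul_apply]; ring)
  have e1 : deriv (fun s => C s * C s * P s)
      = fun s => 2*(deriv C s)*C s*P s + C s*C s*(deriv P s) := funext fun s => (s1 s).deriv
  -- level 2
  have s2 : ∀ s, HasDerivAt (fun s => 2*(deriv C s)*C s*P s + C s*C s*(deriv P s))
      (2*(deriv (deriv C) s)*C s*P s + 2*(deriv C s*deriv C s)*P s
        + 4*(deriv C s)*C s*(deriv P s) + C s*C s*(deriv (deriv P) s)) s := fun s =>
    (((((dC1 s).const_mul 2).mul (dC s)).mul (dP s)).add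
      (((dC s).mul (dC s)).mul (dP1 s))).congr_deriv (by simp only [Pi.mul_apply]; ring)
  have e2 : deriv (fun s => 2*(deriv C s)*C s*P s + C s*C s*(deriv P s))
      = fun s => 2*(deriv (deriv C) s)*C s*P s + 2*(deriv C s*deriv C s)*P s
        + 4*(deriv C s)*C s*(deriv P s) + C s*C s*(deriv (deriv P) s) :=
    funext fun s => (s2 s).deriv
  -- level 3
  have s3 : ∀ s, HasDerivAt (fun s => 2*(deriv (deriv C) s)*C s*P s + 2*(deriv C s*deriv C s)*P s
        + 4*(deriv C s)*C s*(deriv P s) + C s*C s*(deriv (deriv P) s))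
      (2*(deriv (deriv (deriv C)) s)*C s*P s + 6*(deriv (deriv C) s)*(deriv C s)*P s
        + 6*(deriv (deriv C) s)*C s*(deriv P s) + 6*(deriv C s*deriv C s)*(deriv P s)
        + 6*(deriv C s)*C s*(deriv (deriv P) s) + C s*C s*(deriv (deriv (deriv P)) s)) s := by
    intro s
    have hA := (((dC2 s).const_mul 2).mul (dC s)).mul (dP s)
    have hB := (((dC1 s).mul (dC1 s)).const_mul 2).mul (dP s)
    have hCc := (((dC1 s).const_mul 4).mul (dC s)).mul (dP1 s)
    have hD := ((dC s).mul (dC s)).mul (dP2 s)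
    exact (((hA.add hB).add hCc).add hD).congr_deriv (by simp only [Pi.mul_apply]; ring)
  have e3 : deriv (fun s => 2*(deriv (deriv C) s)*C s*P s + 2*(deriv C s*deriv C s)*P s
        + 4*(deriv C s)*C s*(deriv P s) + C s*C s*(deriv (deriv P) s))
      = fun s => 2*(deriv (deriv (deriv C)) s)*C s*P s + 6*(deriv (deriv C) s)*(deriv C s)*P s
        + 6*(deriv (deriv C) s)*C s*(deriv P s) + 6*(deriv C s*deriv C s)*(deriv P s)
        + 6*(deriv C s)*C s*(deriv (deriv P) s) + C s*C s*(deriv (deriv (deriv P)) s) :=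
    funext fun s => (s3 s).deriv
  -- level 4 at the point
  have s4 : HasDerivAt (fun s => 2*(deriv (deriv (deriv C)) s)*C s*P s
        + 6*(deriv (deriv C) s)*(deriv C s)*P s
        + 6*(deriv (deriv C) s)*C s*(deriv P s) + 6*(deriv C s*deriv C s)*(deriv P s)
        + 6*(deriv C s)*C s*(deriv (deriv P) s) + C s*C s*(deriv (deriv (deriv P)) s))
      (6 * (deriv (deriv C) a)^2 * P a) a := by
    have hA := (((dC3 a).const_mul 2).mul (dC a)).mul (dP a)
    have hB := (((dC2 a).const_mul 6).mul (dC1 a)).mul (dP a)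
    have hCc := (((dC2 a).const_mul 6).mul (dC a)).mul (dP1 a)
    have hD := (((dC1 a).mul (dC1 a)).const_mul 6).mul (dP1 a)
    have hE := (((dC1 a).const_mul 6).mul (dC a)).mul (dP2 a)
    have hF := ((dC a).mul (dC a)).mul (dP3 a)
    exact (((((hA.add hB).add hCc).add hD).add hE).add hF).congr_deriv (by simp only [Pi.mul_apply]; rw [h0, h1]; ring)
  refine ⟨?_, ?_, ?_, ?_⟩
  · rw [(s1 a).deriv, h0, h1]; ring
  · rw [e1, (s2 a).deriv, h0, h1]; ring
  · rw [e1, e2, (s3 a).deriv, h0, h1]; ring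
  · rw [e1, e2, e3, s4.deriv]

lemma dX_line (F : ℝ × ℝ → ℝ) (hF : ContDiff ℝ (⊤ : ℕ∞) F) (b : ℝ) :
    (fun s => dX F (s, b)) = deriv (fun s => F (s, b)) :=
  funext fun s => ((hasDerivAt_dX F ((hF.differentiable (by simp)) (s, b))).deriv).symm

lemma line_derivs (W Q : ℝ → ℝ) (hW : ContDiff ℝ (⊤:ℕ∞) W) (hQ : ContDiff ℝ (⊤:ℕ∞) Q)
    (a : ℝ) (hWa : W a = Real.pi) (hW1 : deriv W a = 0) :
    deriv (fun s => (1+Real.cos (W s))*Q s/4) a = 0 ∧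
    deriv (deriv (fun s => (1+Real.cos (W s))*Q s/4)) a = 0 ∧
    deriv (deriv (deriv (fun s => (1+Real.cos (W s))*Q s/4))) a = 0 ∧
    deriv (deriv (deriv (deriv (fun s => (1+Real.cos (W s))*Q s/4)))) a
      = 3 * (deriv (deriv W) a)^2 * Q a / 4 := by
  have h1le : ((⊤:ℕ∞) : WithTop ℕ∞) ≠ 0 := by simp
  have hWd : Differentiable ℝ W := hW.differentiable h1le
  have hW1c : ContDiff ℝ (⊤:ℕ∞) (deriv W) := (contDiff_infty_iff_deriv.mp hW).2
  have hW1d : Differentiable ℝ (deriv W) := hW1c.differentiable h1le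
  have hC : ContDiff ℝ (⊤:ℕ∞) (fun s => Real.cos (W s/2)) :=
    Real.contDiff_cos.comp (hW.div_const 2)
  have hQ2 : ContDiff ℝ (⊤:ℕ∞) (fun s => Q s/2) := hQ.div_const 2
  have hC0 : (fun s => Real.cos (W s/2)) a = 0 := by
    simp only [hWa]; exact Real.cos_pi_div_two
  have hC1 : deriv (fun s => Real.cos (W s/2)) a = 0 := by
    rw [(((hWd a).hasDerivAt.div_const 2).cos).deriv, hWa, hW1]
    norm_num
  have hfun : (fun s => (1+Real.cos (W s))*Q s/4)
      = fun s => Real.cos (W s/2) * Real.cos (W s/2) * (Q s/2) := by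
    funext s; rw [cos_half_sq]; ring
  have hCC : deriv (deriv (fun s => Real.cos (W s/2))) a = -(deriv (deriv W) a)/2 := by
    have hd : deriv (fun s => Real.cos (W s/2)) = fun s => -Real.sin (W s/2) * (deriv W s/2) :=
      funext fun s => (((hWd s).hasDerivAt.div_const 2).cos).deriv
    rw [hd]
    have comb := (((hWd a).hasDerivAt.div_const 2).sin.neg).mul ((hW1d a).hasDerivAt.div_const 2)
    rw [HasDerivAt.deriv (f := fun s => -Real.sin (W s/2) * (deriv W s/2)) comb]; simp only [Pi.mul_apply, Pi.neg_apply]; rw [hWa, hW1]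
    simp [Real.sin_pi_div_two, Real.cos_pi_div_two]
    ring
  obtain ⟨q1, q2, q3, q4⟩ :=
    quad_derivs (fun s => Real.cos (W s/2)) (fun s => Q s/2) hC hQ2 a hC0 hC1
  refine ⟨?_, ?_, ?_, ?_⟩
  · rw [hfun]; exact q1
  · rw [hfun]; exact q2
  · rw [hfun]; exact q3
  · rw [hfun]
    calc deriv (deriv (deriv (deriv (fun s => Real.cos (W s/2) * Real.cos (W s/2) * (Q s/2))))) a
        = 6 * (deriv (deriv (fun s => Real.cos (W s/2))) a)^2 * (Q a/2) := q4
      _ = 3 * (deriv (deriv W) a)^2 * Q a / 4 := by rw [hCC]; ring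
lemma xchain (w p : ℝ × ℝ → ℝ) (hw : ContDiff ℝ (⊤:ℕ∞) w) (hp : ContDiff ℝ (⊤:ℕ∞) p)
    (X₀ Y₀ : ℝ) (hwπ : w (X₀, Y₀) = Real.pi) (hwX : dX w (X₀, Y₀) = 0) :
    dX (fun P => (1+Real.cos (w P))*p P/4) (X₀, Y₀) = 0 ∧
    dX (dX (fun P => (1+Real.cos (w P))*p P/4)) (X₀, Y₀) = 0 ∧
    dX (dX (dX (fun P => (1+Real.cos (w P))*p P/4))) (X₀, Y₀) = 0 ∧
    dX (dX (dX (dX (fun P => (1+Real.cos (w P))*p P/4)))) (X₀, Y₀)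
      = 3 * dX (dX w) (X₀, Y₀)^2 * p (X₀, Y₀) / 4 ∧
    dY (fun P => (1+Real.cos (w P))*p P/4) (X₀, Y₀) = 0 ∧
    dY (dX (fun P => (1+Real.cos (w P))*p P/4)) (X₀, Y₀) = 0 := by
  have h1le : ((⊤:ℕ∞) : WithTop ℕ∞) ≠ 0 := by simp
  have hwd : Differentiable ℝ w := hw.differentiable h1le
  have hpd : Differentiable ℝ p := hp.differentiable h1le
  have hF : ContDiff ℝ (⊤:ℕ∞) (fun P => (1+Real.cos (w P))*p P/4) :=
    ((contDiff_const.add (Real.contDiff_cos.comp hw)).mul hp).div_const 4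
  have hFd : Differentiable ℝ (fun P => (1+Real.cos (w P))*p P/4) := hF.differentiable h1le
  have hF1 := contDiff_dX hF
  have hF2 := contDiff_dX hF1
  have hF3 := contDiff_dX hF2
  have hline : ContDiff ℝ (⊤:ℕ∞) (fun s : ℝ => (s, Y₀)) := contDiff_id.prodMk contDiff_const
  have hWc : ContDiff ℝ (⊤:ℕ∞) (fun s => w (s, Y₀)) := hw.comp hline
  have hQc : ContDiff ℝ (⊤:ℕ∞) (fun s => p (s, Y₀)) := hp.comp hline
  have hW1' : deriv (fun s => w (s, Y₀)) X₀ = 0 :=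
    ((hasDerivAt_dX w (hwd _)).deriv).trans hwX
  obtain ⟨l1, l2, l3, l4⟩ := line_derivs (fun s => w (s, Y₀)) (fun s => p (s, Y₀))
    hWc hQc X₀ hwπ hW1'
  -- the chain of line identities
  have E0 : (fun s => dX (fun P => (1+Real.cos (w P))*p P/4) (s, Y₀))
      = deriv (fun s => (1+Real.cos (w (s, Y₀)))*p (s, Y₀)/4) :=
    dX_line _ hF Y₀
  have E1 : (fun s => dX (dX (fun P => (1+Real.cos (w P))*p P/4)) (s, Y₀))
      = deriv (deriv (fun s => (1+Real.cos (w (s, Y₀)))*p (s, Y₀)/4)) := by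
    rw [dX_line _ hF1 Y₀, E0]
  have E2 : (fun s => dX (dX (dX (fun P => (1+Real.cos (w P))*p P/4))) (s, Y₀))
      = deriv (deriv (deriv (fun s => (1+Real.cos (w (s, Y₀)))*p (s, Y₀)/4))) := by
    rw [dX_line _ hF2 Y₀, E1]
  have E3 : (fun s => dX (dX (dX (dX (fun P => (1+Real.cos (w P))*p P/4)))) (s, Y₀))
      = deriv (deriv (deriv (deriv (fun s => (1+Real.cos (w (s, Y₀)))*p (s, Y₀)/4)))) := by
    rw [dX_line _ hF3 Y₀, E2]
  have hw2 : deriv (deriv (fun s => w (s, Y₀))) X₀ = dX (dX w) (X₀, Y₀) := by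
    have h1 : (fun s => dX w (s, Y₀)) = deriv (fun s => w (s, Y₀)) := dX_line w hw Y₀
    rw [← h1]
    exact (hasDerivAt_dX (dX w) ((contDiff_dX hw).differentiable h1le _)).deriv
  refine ⟨(congrFun E0 X₀).trans l1, (congrFun E1 X₀).trans l2, (congrFun E2 X₀).trans l3,
    (congrFun E3 X₀).trans (l4.trans ?_), ?_, ?_⟩
  · calc 3 * (deriv (deriv (fun s => w (s, Y₀))) X₀)^2 * p (X₀, Y₀) / 4
        = 3 * (dX (dX w) (X₀, Y₀))^2 * p (X₀, Y₀) / 4 := by rw [hw2]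
      _ = 3 * dX (dX w) (X₀, Y₀)^2 * p (X₀, Y₀) / 4 := by ring
  · -- dY F = 0
    have hA := hasDerivAt_dY w (hwd (X₀, Y₀))
    have hB := hasDerivAt_dY p (hpd (X₀, Y₀))
    have comb := (((hA.cos.const_add 1).mul hB).div_const 4)
    refine ((hasDerivAt_dY _ (hFd (X₀, Y₀))).unique comb).trans ?_
    rw [hwπ]
    norm_num [Real.sin_pi, Real.cos_pi]
  · -- dY (dX F) = 0
    have hdXF : ∀ a b : ℝ, dX (fun P => (1+Real.cos (w P))*p P/4) (a, b)
        = (-Real.sin (w (a, b)) * dX w (a, b) * p (a, b)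
            + (1+Real.cos (w (a, b))) * dX p (a, b))/4 := by
      intro a b
      have comb := ((((hasDerivAt_dX w (hwd (a, b))).cos.const_add 1).mul
        (hasDerivAt_dX p (hpd (a, b)))).div_const 4)
      exact ((hasDerivAt_dX _ (hFd (a, b))).unique comb).trans (by ring)
    have hB0 : (fun s => dX (fun P => (1+Real.cos (w P))*p P/4) (X₀, s))
        = fun s => (-Real.sin (w (X₀, s)) * dX w (X₀, s) * p (X₀, s)
            + (1+Real.cos (w (X₀, s))) * dX p (X₀, s))/4 :=
      funext fun s => hdXF X₀ s
    have step : dY (dX (fun P => (1+Real.cos (w P))*p P/4)) (X₀, Y₀)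
        = deriv (fun s => dX (fun P => (1+Real.cos (w P))*p P/4) (X₀, s)) Y₀ :=
      ((hasDerivAt_dY _ (hF1.differentiable h1le (X₀, Y₀))).deriv).symm
    rw [step, hB0]
    have hA := hasDerivAt_dY w (hwd (X₀, Y₀))
    have hB := hasDerivAt_dY p (hpd (X₀, Y₀))
    have hC := hasDerivAt_dY (dX w) ((contDiff_dX hw).differentiable h1le (X₀, Y₀))
    have hD := hasDerivAt_dY (dX p) ((contDiff_dX hp).differentiable h1le (X₀, Y₀))
    have comb2 := ((((hA.sin.neg.mul hC).mul hB).add ((hA.cos.const_add 1).mul hD)).div_const 4)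
    rw [HasDerivAt.deriv (f := fun s => (-Real.sin (w (X₀, s)) * dX w (X₀, s) * p (X₀, s)
          + (1+Real.cos (w (X₀, s))) * dX p (X₀, s))/4) comb2]; simp only [Pi.mul_apply, Pi.neg_apply]; rw [hwπ, hwX]
    norm_num [Real.sin_pi, Real.cos_pi]


/-- partial derivatives of `x` and `t` at a Type 2 point
(`w = π`, `w_X = 0`). -/
theorem xt_derivatives_at_type2_point
    (c : ℝ → ℝ) (c₀ : ℝ) (hc₀ : 0 < c₀) (hc : ContDiff ℝ (⊤ : ℕ∞) c)
    (hclb : ∀ v, c₀ ≤ c v)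
    (u w z p q x t : ℝ × ℝ → ℝ)
    (hsmooth : Smooth7 u w z p q x t)
    (hsys : SolvesSystem c u w z p q x t)
    (X₀ Y₀ : ℝ) (hwπ : w (X₀, Y₀) = Real.pi) (hwX : dX w (X₀, Y₀) = 0)
    (u₀ z₀ p₀ q₀ : ℝ)
    (hu₀ : u₀ = u (X₀, Y₀)) (hz₀ : z₀ = z (X₀, Y₀))
    (hp₀ : p₀ = p (X₀, Y₀)) (hq₀ : q₀ = q (X₀, Y₀)) :
    dX x (X₀, Y₀) = 0 ∧
    dX (dX x) (X₀, Y₀) = 0 ∧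
    dX (dX (dX x)) (X₀, Y₀) = 0 ∧
    dX (dX (dX (dX x))) (X₀, Y₀) = 0 ∧
    dY (dX x) (X₀, Y₀) = 0 ∧
    dY (dX (dX x)) (X₀, Y₀) = 0 ∧
    dX (dX (dX (dX (dX x)))) (X₀, Y₀) = 3 * dX (dX w) (X₀, Y₀) ^ 2 * p₀ / 4 ∧
    dY x (X₀, Y₀) = -((1 + Real.cos z₀) * q₀) / 4 ∧
    dX t (X₀, Y₀) = 0 ∧
    dX (dX t) (X₀, Y₀) = 0 ∧
    dX (dX (dX t)) (X₀, Y₀) = 0 ∧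
    dX (dX (dX (dX t))) (X₀, Y₀) = 0 ∧
    dY (dX t) (X₀, Y₀) = 0 ∧
    dY (dX (dX t)) (X₀, Y₀) = 0 ∧
    dX (dX (dX (dX (dX t)))) (X₀, Y₀) = 3 * dX (dX w) (X₀, Y₀) ^ 2 * p₀ / (4 * c u₀) ∧
    dY t (X₀, Y₀) = (1 + Real.cos z₀) * q₀ / (4 * c u₀) := by
  obtain ⟨hu, hw, hz, hp, hq, hx, ht⟩ := hsmooth
  have hcne : ∀ P : ℝ × ℝ, c (u P) ≠ 0 :=
    fun P => ne_of_gt (lt_of_lt_of_le hc₀ (hclb _))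
  have hρ : ContDiff ℝ (⊤:ℕ∞) (fun P => p P / c (u P)) :=
    hp.div (hc.comp hu) hcne
  have hFx : dX x = fun P => (1 + Real.cos (w P)) * p P / 4 :=
    funext fun P => (hsys P).2.2.2.2.2.2.1
  have hFt : dX t = fun P => (1 + Real.cos (w P)) * (p P / c (u P)) / 4 := by
    funext P
    rw [(hsys P).2.2.2.2.2.2.2.2.1]
    field_simp
  obtain ⟨a1, a2, a3, a4, a5, a6⟩ := xchain w p hw hp X₀ Y₀ hwπ hwX
  obtain ⟨b1, b2, b3, b4, b5, b6⟩ :=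
    xchain w (fun P => p P / c (u P)) hw hρ X₀ Y₀ hwπ hwX
  refine ⟨?_, ?_, ?_, ?_, ?_, ?_, ?_, ?_, ?_, ?_, ?_, ?_, ?_, ?_, ?_, ?_⟩
  · rw [(hsys (X₀, Y₀)).2.2.2.2.2.2.1, hwπ]
    norm_num [Real.cos_pi]
  · rw [hFx]; exact a1
  · rw [hFx]; exact a2
  · rw [hFx]; exact a3
  · rw [hFx]; exact a5
  · rw [hFx]; exact a6
  · rw [hFx, hp₀]; exact a4
  · rw [hz₀, hq₀]; exact (hsys (X₀, Y₀)).2.2.2.2.2.2.2.1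
  · rw [(hsys (X₀, Y₀)).2.2.2.2.2.2.2.2.1, hwπ]
    norm_num [Real.cos_pi]
  · rw [hFt]; exact b1
  · rw [hFt]; exact b2
  · rw [hFt]; exact b3
  · rw [hFt]; exact b5
  · rw [hFt]; exact b6
  · rw [hFt]
    refine b4.trans ?_
    show 3 * dX (dX w) (X₀, Y₀)^2 * (p (X₀, Y₀) / c (u (X₀, Y₀))) / 4
      = 3 * dX (dX w) (X₀, Y₀) ^ 2 * p₀ / (4 * c u₀)
    rw [hp₀, hu₀]
    field_simp
  · rw [hz₀, hq₀, hu₀]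
    exact (hsys (X₀, Y₀)).2.2.2.2.2.2.2.2.2
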